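/- If G is a k-vertex-critical graph belonging to the class H with partition A1,...,A6, then each of A1, A2, A3, A4 is a clique of G; that is, G belongs to the class H*. -/

import Mathlib

open SimpleGraph

/-- The co-gem: the disjoint union `P₄ + P₁`. -/
def cogem : SimpleGraph (Fin 4 ⊕ Fin 1) :=
  pathGraph 4 ⊕g (⊥ : SimpleGraph (Fin 1))

/-- The gem: the complement of the co-gem. -/
def gem : SimpleGraph (Fin 4 ⊕ Fin 1) := cogemᶜ

/-- `G` is `H`-free: no induced subgraph of `G` is isomorphic to `H`. -/
def HFree {W V : Type*} (H : SimpleGraph W) (G : SimpleGraph V) : Prop :=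
  IsEmpty (H ↪g G)

/-- `G` is `k`-vertex-critical: `χ(G) = k` and `χ(G - v) < k` for every vertex `v`. -/
def VertexCritical {V : Type*} (G : SimpleGraph V) (k : ℕ) : Prop :=
  G.chromaticNumber = k ∧ ∀ v : V, (G.induce {v}ᶜ).chromaticNumber < k

/-- `G` belongs to the class `ℋ` with the partition `A₁, …, A₆`. -/
structure ClassH {V : Type*} (G : SimpleGraph V) (A₁ A₂ A₃ A₄ A₅ A₆ : Set V) : Prop where
  gemFree : HFree gem G
  cogemFree : HFree cogem G
  ne₁ : A₁.Nonempty
  ne₂ : A₂.Nonempty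
  ne₃ : A₃.Nonempty
  ne₄ : A₄.Nonempty
  ne₅ : A₅.Nonempty
  ne₆ : A₆.Nonempty
  cover : A₁ ∪ A₂ ∪ A₃ ∪ A₄ ∪ A₅ ∪ A₆ = Set.univ
  disj : List.Pairwise Disjoint [A₁, A₂, A₃, A₄, A₅, A₆]
  comp₁ : ∀ x ∈ A₁, ∀ y ∈ A₂ ∪ A₅, G.Adj x y
  anti₁ : ∀ x ∈ A₁, ∀ y ∈ A₃ ∪ A₄ ∪ A₆, ¬ G.Adj x y
  comp₂ : ∀ x ∈ A₂, ∀ y ∈ A₁ ∪ A₃ ∪ A₆, G.Adj x y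
  anti₂ : ∀ x ∈ A₂, ∀ y ∈ A₄ ∪ A₅, ¬ G.Adj x y
  comp₃ : ∀ x ∈ A₃, ∀ y ∈ A₂ ∪ A₄ ∪ A₆, G.Adj x y
  anti₃ : ∀ x ∈ A₃, ∀ y ∈ A₁ ∪ A₅, ¬ G.Adj x y
  comp₄ : ∀ x ∈ A₄, ∀ y ∈ A₃ ∪ A₅, G.Adj x y
  anti₄ : ∀ x ∈ A₄, ∀ y ∈ A₁ ∪ A₂ ∪ A₆, ¬ G.Adj x y

/-- `G` belongs to the class `ℋ*`: it is in `ℋ` and `A₁, A₂, A₃, A₄` are cliques. -/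
structure ClassHStar {V : Type*} (G : SimpleGraph V) (A₁ A₂ A₃ A₄ A₅ A₆ : Set V)
    extends ClassH G A₁ A₂ A₃ A₄ A₅ A₆ : Prop where
  clique₁ : G.IsClique A₁
  clique₂ : G.IsClique A₂
  clique₃ : G.IsClique A₃
  clique₄ : G.IsClique A₄


namespace Stmt10Aux

open Relation

variable {V : Type*}

/-- Relation `r` restricted to a set `S`. -/
def rOn (r : V → V → Prop) (S : Set V) (a b : V) : Prop := a ∈ S ∧ b ∈ S ∧ r a b

lemma rOn_symm {r : V → V → Prop} (hs : Symmetric r) (S : Set V) : Symmetric (rOn r S) :=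
  fun _ _ h => ⟨h.2.1, h.1, hs h.2.2⟩

/-- Along a chain from a `¬P` vertex to a `P` vertex there is a flipping step. -/
lemma flipStep {r : V → V → Prop} {P : V → Prop} {x y : V}
    (h : ReflTransGen r x y) (hx : ¬ P x) (hy : P y) :
    ∃ a b, ReflTransGen r x a ∧ r a b ∧ ¬ P a ∧ P b := by
  induction h with
  | refl => exact absurd hy hx
  | @tail b c hxb hbc ih =>
    by_cases hPb : P b
    · exact ih hPb
    · exact ⟨b, c, hxb, hbc, hPb, hy⟩

/-- Core "one-step Seinsche" lemma. -/
lemma core {r : V → V → Prop} (hsym : Symmetric r) (hirr : ∀ a, ¬ r a a)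
    {T : Set V} {v w : V} (hv : v ∈ T) (hw : w ∈ T \ {v}) (hnr : ¬ r v w)
    (hconn : ∀ x ∈ T, ∀ y ∈ T, ReflTransGen (rOn r T) x y)
    (hdis : ∃ p ∈ T \ {v}, ∃ q ∈ T \ {v}, ¬ ReflTransGen (rOn r (T \ {v})) p q) :
    ∃ a ∈ T \ {v}, ∃ b ∈ T \ {v}, ∃ y' ∈ T \ {v},
      b ≠ a ∧ b ≠ y' ∧ a ≠ y' ∧ r b a ∧ r a v ∧ r v y' ∧ ¬ r b v ∧ ¬ r b y' ∧ ¬ r a y' := by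
  classical
  set T' : Set V := T \ {v} with hT'
  have hT'sub : T' ⊆ T := Set.diff_subset
  have hsym' : Symmetric (rOn r T') := rOn_symm hsym T'
  have hsymT : Symmetric (rOn r T) := rOn_symm hsym T
  set C1 : Set V := {c | c ∈ T' ∧ ReflTransGen (rOn r T') w c} with hC1
  have hwC1 : w ∈ C1 := ⟨hw, ReflTransGen.refl⟩
  have hC1closed : ∀ c ∈ C1, ∀ d, rOn r T' c d → d ∈ C1 := by
    intro c hc d hcd
    exact ⟨hcd.2.1, hc.2.tail hcd⟩
  -- existence of z ∈ T' not reachable from w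
  obtain ⟨z, hzT', hzC1⟩ : ∃ z ∈ T', z ∉ C1 := by
    by_contra h
    push_neg at h
    obtain ⟨p, hp, q, hq, hpq⟩ := hdis
    exact hpq ((((@ReflTransGen.stdSymm _ _ ⟨fun _ _ h => hsym' h⟩).symm _ _) (h p hp).2).trans (h q hq).2)
  set C2 : Set V := {c | c ∈ T' ∧ ReflTransGen (rOn r T') z c} with hC2
  have hC2closed : ∀ c ∈ C2, ∀ d, rOn r T' c d → d ∈ C2 := by
    intro c hc d hcd
    exact ⟨hcd.2.1, hc.2.tail hcd⟩
  have hzC2 : z ∈ C2 := ⟨hzT', ReflTransGen.refl⟩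
  have hC2notC1 : ∀ c ∈ C2, c ∉ C1 := by
    intro c hc hcC1
    exact hzC1 ⟨hzT', hcC1.2.trans (((@ReflTransGen.stdSymm _ _ ⟨fun _ _ h => hsym' h⟩).symm _ _) hc.2)⟩
  -- exit lemma: from a chain in T ending outside C1 (resp C2), v has an r-neighbor in C1
  have exit : ∀ (C : Set V), C ⊆ T' → (∀ c ∈ C, ∀ d, rOn r T' c d → d ∈ C) →
      ∀ x ∈ C, ∀ y ∈ T, y ∉ C → ∃ a ∈ C, r a v := by
    intro C hCsub hCcl x hx y hy hyC
    obtain ⟨a, b, _, hab, haC, hbC⟩ :=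
      flipStep (P := fun t => t ∉ C) (hconn x (hT'sub (hCsub hx)) y hy)
        (by simpa using hx) hyC
    by_cases hbv : b = v
    · exact ⟨a, not_not.mp haC, hbv ▸ hab.2.2⟩
    · exact absurd (hCcl a (not_not.mp haC) b ⟨hCsub (not_not.mp haC), ⟨hab.2.1, hbv⟩, hab.2.2⟩) hbC
  obtain ⟨c₁, hc₁C1, hc₁v⟩ := exit C1 (fun c hc => hc.1) hC1closed w hwC1 z (hT'sub hzT') hzC1
  obtain ⟨y', hy'C2, hy'v⟩ := exit C2 (fun c hc => hc.1) hC2closed z hzC2 w (hT'sub hw) (by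
    intro hwC2
    exact hzC1 ⟨hzT', ((@ReflTransGen.stdSymm _ _ ⟨fun _ _ h => hsym' h⟩).symm _ _) hwC2.2⟩)
  -- flip inside C1 from w (non r-neighbor of v) to c₁ (r-neighbor of v)
  obtain ⟨b, a, hwb, hba, hbv, hav⟩ :=
    flipStep (P := fun t => r v t) hc₁C1.2 hnr (hsym hc₁v)
  have hbC1 : b ∈ C1 := ⟨hba.1, hwb⟩
  have haC1 : a ∈ C1 := hC1closed b hbC1 a hba
  have hy'C1 : y' ∉ C1 := hC2notC1 y' hy'C2
  refine ⟨a, haC1.1, b, hbC1.1, y', hy'C2.1, ?_, ?_, ?_, hba.2.2, hsym hav, hsym hy'v,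
      fun h => hbv (hsym h), ?_, ?_⟩
  · rintro rfl; exact hirr b hba.2.2
  · rintro rfl; exact hy'C1 hbC1
  · rintro rfl; exact hy'C1 haC1
  · intro h
    exact hy'C1 (hC1closed b hbC1 y' ⟨hbC1.1, hy'C2.1, h⟩)
  · intro h
    exact hy'C1 (hC1closed a haC1 y' ⟨haC1.1, hy'C2.1, h⟩)


/-- Seinsche: within a P4-free ambient set, no subset with at least two elements is both
connected and co-connected. -/
lemma seinsche {G : SimpleGraph V} {M : Set V}
    (hP4 : ∀ a ∈ M, ∀ b ∈ M, ∀ c ∈ M, ∀ d ∈ M,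
      G.Adj a b → G.Adj b c → G.Adj c d → ¬ G.Adj a c → ¬ G.Adj a d → ¬ G.Adj b d → False) :
    ∀ n (T : Set V), T.Finite → T.ncard = n → T ⊆ M → ∀ x ∈ T, ∀ y ∈ T, x ≠ y →
    (∀ p ∈ T, ∀ q ∈ T, ReflTransGen (rOn G.Adj T) p q) →
    (∀ p ∈ T, ∀ q ∈ T, ReflTransGen (rOn (fun a b => a ≠ b ∧ ¬ G.Adj a b) T) p q) →
    False := by
  classical
  intro n
  induction n using Nat.strong_induction_on with
  | _ n IH =>
  intro T hTfin hTcard hTM x hx y hy hxy hconn hcoconn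
  set co : V → V → Prop := fun a b => a ≠ b ∧ ¬ G.Adj a b with hcodef
  have hcosym : Symmetric co := fun a b h => ⟨h.1.symm, fun hadj => h.2 hadj.symm⟩
  have hcoirr : ∀ a, ¬ co a a := fun a h => h.1 rfl
  set v : V := x with hvdef
  set T' : Set V := T \ {v} with hT'def
  -- v has a co-neighbor w in T'
  obtain ⟨w, hwstep, -⟩ : ∃ c, rOn co T v c ∧ ReflTransGen (rOn co T) c y := by
    rcases (hcoconn v hx y hy).cases_head with h | h
    · exact absurd h hxy
    · exact h
  have hwT' : w ∈ T' := ⟨hwstep.2.1, fun h => hwstep.2.2.1 (Set.eq_of_mem_singleton h).symm⟩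
  have hnadjvw : ¬ G.Adj v w := hwstep.2.2.2
  -- v has a neighbor wbar in T'
  obtain ⟨wb, hwbstep, -⟩ : ∃ c, rOn G.Adj T v c ∧ ReflTransGen (rOn G.Adj T) c y := by
    rcases (hconn v hx y hy).cases_head with h | h
    · exact absurd h hxy
    · exact h
  have hwbT' : wb ∈ T' := ⟨hwbstep.2.1, fun h => (G.ne_of_adj hwbstep.2.2)
      (Set.eq_of_mem_singleton h).symm⟩
  by_cases hbase : ∀ p ∈ T', ∀ q ∈ T', p = q
  · exact hnadjvw (hbase wb hwbT' w hwT' ▸ hwbstep.2.2)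
  · push_neg at hbase
    obtain ⟨p, hp, q, hq, hpq⟩ := hbase
    have hT'lt : T'.ncard < n := by
      rw [← hTcard]
      exact Set.ncard_lt_ncard (Set.sdiff_singleton_ssubset.mpr hx) hTfin
    have hIH := IH T'.ncard hT'lt T' hTfin.diff rfl (Set.diff_subset.trans hTM)
      p hp q hq hpq
    by_cases hconn' : ∀ p ∈ T', ∀ q ∈ T', ReflTransGen (rOn G.Adj T') p q
    · -- complement restricted to T' is disconnected
      have hcodis : ∃ p ∈ T', ∃ q ∈ T', ¬ ReflTransGen (rOn co T') p q := by
        by_contra h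
        push_neg at h
        exact hIH hconn' h
      obtain ⟨a, ha, b, hb, y', hy', hba, hby', hay', hrba, hrav, hrvy', hnbv, hnby', hnay'⟩ :=
        core hcosym hcoirr hx hwbT' (fun h => h.2 hwbstep.2.2) hcoconn hcodis
      -- translate to a G-induced P4 : a - y' - b - v
      have hAdjbv : G.Adj b v := by
        by_contra h
        exact hnbv ⟨fun h' => hb.2 (Set.mem_singleton_iff.mpr h'), h⟩
      have hAdjby' : G.Adj b y' := by
        by_contra h; exact hnby' ⟨hby', h⟩
      have hAdjay' : G.Adj a y' := by
        by_contra h; exact hnay' ⟨hay', h⟩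
      exact hP4 a (hTM (Set.diff_subset ha)) y' (hTM (Set.diff_subset hy'))
        b (hTM (Set.diff_subset hb)) v (hTM hx)
        hAdjay' hAdjby'.symm hAdjbv (fun h => hrba.2 h.symm) hrav.2
        (fun h => hrvy'.2 h.symm)
    · push_neg at hconn'
      obtain ⟨a, ha, b, hb, y', hy', hba, hby', hay', hrba, hrav, hrvy', hnbv, hnby', hnay'⟩ :=
        core (fun _ _ h => h.symm) (fun a => G.irrefl) hx hwT' hnadjvw hconn hconn'
      exact hP4 b (hTM (Set.diff_subset hb)) a (hTM (Set.diff_subset ha)) v (hTM hx)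
        y' (hTM (Set.diff_subset hy'))
        hrba hrav hrvy' hnbv hnby' hnay'


lemma one_le_k [Fintype V] {G : SimpleGraph V} {k : ℕ} (hcrit : VertexCritical G k)
    (u : V) : 1 ≤ k := by
  have h := hcrit.2 u
  by_contra hk
  interval_cases k
  simp at h

lemma exists_coloring [Fintype V] {G : SimpleGraph V} {k : ℕ} (hcrit : VertexCritical G k)
    (u : V) : Nonempty ((G.induce ({u}ᶜ : Set V)).Coloring (Fin (k - 1))) := by
  have h := hcrit.2 u
  have hne : (G.induce ({u}ᶜ : Set V)).chromaticNumber ≠ ⊤ := (h.trans_le le_top).ne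
  obtain ⟨m, hm⟩ := WithTop.ne_top_iff_exists.mp hne
  have hmk : m < k := by
    have h2 := h
    rw [← hm] at h2
    exact Nat.cast_lt.mp h2
  have : (G.induce ({u}ᶜ : Set V)).chromaticNumber ≤ (↑(k - 1) : ℕ∞) := by
    rw [← hm]
    exact Nat.cast_le.mpr (Nat.le_sub_one_of_lt hmk)
  exact chromaticNumber_le_iff_colorable.mp this

lemma chromatic_lt_absurd [Fintype V] {G : SimpleGraph V} {k : ℕ}
    (hcrit : VertexCritical G k) (hk : 1 ≤ k) (C : G.Coloring (Fin (k - 1))) : False := by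
  have h1 : G.chromaticNumber ≤ (↑(k - 1) : ℕ∞) :=
    SimpleGraph.Colorable.chromaticNumber_le (show G.Colorable (k - 1) from ⟨C⟩)
  rw [hcrit.1] at h1
  have : k ≤ k - 1 := by exact_mod_cast h1
  omega

/-- Counting lemma: two cliques, `K'` anticomplete to `u ∈ K`, such that every neighbor `z`
of `u` that is not adjacent to some `w ∈ K'` lies in `K`; then `|K'| ≤ |K| - 1`. -/
lemma cardLe [Fintype V] {G : SimpleGraph V} {k : ℕ} (hcrit : VertexCritical G k)
    {K K' : Set V} {u : V} (hu : u ∈ K)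
    (hK : G.IsClique K) (hK' : G.IsClique K')
    (hanti : ∀ w ∈ K', ¬ G.Adj u w) (hne : u ∉ K')
    (hside : ∀ w ∈ K', ∀ z, G.Adj u z → ¬ G.Adj w z → z ∈ K) :
    K'.ncard ≤ K.ncard - 1 := by
  classical
  have hk : 1 ≤ k := one_le_k hcrit u
  obtain ⟨φ⟩ := exists_coloring hcrit u
  have hmemc : ∀ x : V, x ≠ u → x ∈ ({u}ᶜ : Set V) := by
    intro x hx; simpa using hx
  have key : ∀ w (hw : w ∈ K'), ∃ z, ∃ (hzK : z ∈ K) (hzu : z ≠ u),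
      φ ⟨z, hmemc z hzu⟩ = φ ⟨w, hmemc w (fun h => hne (h ▸ hw))⟩ := by
    intro w hw
    have hwu : w ≠ u := fun h => hne (h ▸ hw)
    by_contra hnone
    push_neg at hnone
    -- recolor u with the color of w
    have valid : ∀ {a b : V}, G.Adj a b →
        (fun x => if h : x = u then φ ⟨w, hmemc w hwu⟩ else φ ⟨x, hmemc x h⟩) a ≠
        (fun x => if h : x = u then φ ⟨w, hmemc w hwu⟩ else φ ⟨x, hmemc x h⟩) b := by
      intro a b hab
      by_cases hA : a = u <;> by_cases hB : b = u
      · exact absurd (hA ▸ hB ▸ hab) (G.irrefl)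
      · subst hA
        simp only [dif_pos rfl, dif_neg hB]
        by_cases hwb : G.Adj w b
        · exact φ.valid (by simpa using hwb)
        · intro hEq
          exact hnone b (hside w hw b hab hwb) hB hEq.symm
      · subst hB
        simp only [dif_pos rfl, dif_neg hA]
        by_cases hwa : G.Adj w a
        · intro hEq
          exact φ.valid (by simpa using hwa) hEq.symm
        · intro hEq
          exact hnone a (hside w hw a hab.symm hwa) hA hEq
      · simp only [dif_neg hA, dif_neg hB]
        exact φ.valid (by simpa using hab)
    exact chromatic_lt_absurd hcrit hk (Coloring.mk _ fun {a b} hab => valid hab)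
  choose! f hf1 hf2 hf3 using key
  have : K'.ncard ≤ (K \ {u}).ncard := by
    apply Set.ncard_le_ncard_of_injOn f
    · intro w hw
      exact ⟨hf1 w hw, by simpa using hf2 w hw⟩
    · intro w hw w' hw' hEq
      by_contra hww
      have hadj : G.Adj w w' := hK' hw hw' hww
      have h0 : φ ⟨f w, hmemc _ (hf2 w hw)⟩ = φ ⟨f w', hmemc _ (hf2 w' hw')⟩ :=
        congrArg φ (Subtype.ext hEq)
      exact φ.valid (by simpa using hadj)
        ((hf3 w hw).symm.trans (h0.trans (hf3 w' hw')))
  rwa [Set.ncard_diff_singleton_of_mem hu] at this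


/-- A module of a vertex-critical graph all of whose subsets avoid induced `P4`s is a clique. -/
lemma module_clique [Fintype V] {G : SimpleGraph V} {k : ℕ} (hcrit : VertexCritical G k)
    {M : Set V}
    (hP4 : ∀ a ∈ M, ∀ b ∈ M, ∀ c ∈ M, ∀ d ∈ M,
      G.Adj a b → G.Adj b c → G.Adj c d → ¬ G.Adj a c → ¬ G.Adj a d → ¬ G.Adj b d → False) :
    ∀ n (S : Set V), S.ncard = n → S ⊆ M →
      (∀ w ∉ S, ∀ x ∈ S, ∀ y ∈ S, (G.Adj w x ↔ G.Adj w y)) → G.IsClique S := by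
  classical
  intro n
  induction n using Nat.strong_induction_on with
  | _ n IH =>
  intro S hcard hSM hmod
  by_contra hnc
  obtain ⟨u, hu, v, hv, huv, hnadj⟩ : ∃ u ∈ S, ∃ v ∈ S, u ≠ v ∧ ¬ G.Adj u v := by
    by_contra h
    push_neg at h
    exact hnc fun x hx y hy hxy => h x hx y hy hxy
  set co : V → V → Prop := fun a b => a ≠ b ∧ ¬ G.Adj a b with hcodef
  have hcosym : Symmetric co := fun a b h => ⟨h.1.symm, fun hadj => h.2 hadj.symm⟩
  have hadjsymOn : Symmetric (rOn G.Adj S) := rOn_symm (fun _ _ h => h.symm) S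
  have hcosymOn : Symmetric (rOn co S) := rOn_symm hcosym S
  -- the co-component of u in S
  set C : Set V := {c | c ∈ S ∧ ReflTransGen (rOn co S) u c} with hCdef
  have hCsub : C ⊆ S := fun c hc => hc.1
  have hCu : u ∈ C := ⟨hu, ReflTransGen.refl⟩
  have hCv : v ∈ C := ⟨hv, ReflTransGen.single ⟨hu, hv, huv, hnadj⟩⟩
  have hCclosed : ∀ c ∈ C, ∀ d, rOn co S c d → d ∈ C := fun c hc d hcd => ⟨hcd.2.1, hc.2.tail hcd⟩
  have hCmod : ∀ w ∉ C, ∀ x ∈ C, ∀ y ∈ C, (G.Adj w x ↔ G.Adj w y) := by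
    intro w hw x hx y hy
    by_cases hwS : w ∈ S
    · have hadj : ∀ c ∈ C, G.Adj w c := by
        intro c hc
        by_contra hn
        by_cases hwc : w = c
        · exact hw (hwc ▸ hc)
        · exact hw (hCclosed c hc w ⟨hc.1, hwS, fun h => hwc h.symm, fun h => hn h.symm⟩)
      simp [hadj x hx, hadj y hy]
    · exact hmod w hwS x (hCsub hx) y (hCsub hy)
  by_cases hCS : C = S
  · -- S is co-connected; look at components
    set K : Set V := {c | c ∈ S ∧ ReflTransGen (rOn G.Adj S) u c} with hKdef
    have hKsub : K ⊆ S := fun c hc => hc.1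
    have hKu : u ∈ K := ⟨hu, ReflTransGen.refl⟩
    have hKclosed : ∀ c ∈ K, ∀ d, rOn G.Adj S c d → d ∈ K :=
      fun c hc d hcd => ⟨hcd.2.1, hc.2.tail hcd⟩
    by_cases hKall : ∀ z ∈ S, z ∈ K
    · -- S connected and co-connected : Seinsche
      refine seinsche hP4 S.ncard S (Set.toFinite S) rfl hSM u hu v hv huv ?_ ?_
      · intro p hp q hq
        exact (((@ReflTransGen.stdSymm _ _ ⟨fun _ _ h => hadjsymOn h⟩).symm _ _) (hKall p hp).2).trans (hKall q hq).2
      · intro p hp q hq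
        have hp' : p ∈ C := hCS ▸ hp
        have hq' : q ∈ C := hCS ▸ hq
        exact (((@ReflTransGen.stdSymm _ _ ⟨fun _ _ h => hcosymOn h⟩).symm _ _) hp'.2).trans hq'.2
    · push_neg at hKall
      obtain ⟨z, hz, hzK⟩ := hKall
      set K' : Set V := {c | c ∈ S ∧ ReflTransGen (rOn G.Adj S) z c} with hK'def
      have hK'sub : K' ⊆ S := fun c hc => hc.1
      have hK'z : z ∈ K' := ⟨hz, ReflTransGen.refl⟩
      have hK'closed : ∀ c ∈ K', ∀ d, rOn G.Adj S c d → d ∈ K' :=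
        fun c hc d hcd => ⟨hcd.2.1, hc.2.tail hcd⟩
      have hdisj : ∀ c, c ∈ K → c ∈ K' → False := by
        intro c hcK hcK'
        exact hzK ⟨hz, hcK.2.trans (((@ReflTransGen.stdSymm _ _ ⟨fun _ _ h => hadjsymOn h⟩).symm _ _) hcK'.2)⟩
      have huK' : u ∉ K' := fun h => hdisj u hKu h
      have hzKn : z ∉ K := hzK
      -- components are modules
      have hmodcomp : ∀ (L : Set V), L ⊆ S → (∀ c ∈ L, ∀ d, rOn G.Adj S c d → d ∈ L) →
          ∀ w ∉ L, ∀ x ∈ L, ∀ y ∈ L, (G.Adj w x ↔ G.Adj w y) := by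
        intro L hLsub hLcl w hw x hx y hy
        by_cases hwS : w ∈ S
        · have hnadjL : ∀ c ∈ L, ¬ G.Adj w c := by
            intro c hc hn
            exact hw (hLcl c hc w ⟨hLsub hc, hwS, hn.symm⟩)
          simp [hnadjL x hx, hnadjL y hy]
        · exact hmod w hwS x (hLsub hx) y (hLsub hy)
      have hKlt : K.ncard < n := hcard ▸ Set.ncard_lt_ncard
        ⟨hKsub, fun h => hzKn (h hz)⟩ (Set.toFinite S)
      have hK'lt : K'.ncard < n := hcard ▸ Set.ncard_lt_ncard
        ⟨hK'sub, fun h => huK' (h hu)⟩ (Set.toFinite S)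
      have hKclq : G.IsClique K := IH K.ncard hKlt K rfl (hKsub.trans hSM)
        (hmodcomp K hKsub hKclosed)
      have hK'clq : G.IsClique K' := IH K'.ncard hK'lt K' rfl (hK'sub.trans hSM)
        (hmodcomp K' hK'sub hK'closed)
      have hanti1 : ∀ w ∈ K', ¬ G.Adj u w := by
        intro w hw hn
        exact hdisj w (hKclosed u hKu w ⟨hu, hK'sub hw, hn⟩) hw
      have hanti2 : ∀ w ∈ K, ¬ G.Adj z w := by
        intro w hw hn
        exact hdisj w hw (hK'closed z hK'z w ⟨hz, hKsub hw, hn⟩)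
      have hside1 : ∀ w ∈ K', ∀ z', G.Adj u z' → ¬ G.Adj w z' → z' ∈ K := by
        intro w hw z' hadj hnadj'
        by_cases hz'S : z' ∈ S
        · exact hKclosed u hKu z' ⟨hu, hz'S, hadj⟩
        · exact absurd ((hmod z' hz'S u hu w (hK'sub hw)).mp hadj.symm).symm hnadj'
      have hside2 : ∀ w ∈ K, ∀ z', G.Adj z z' → ¬ G.Adj w z' → z' ∈ K' := by
        intro w hw z' hadj hnadj'
        by_cases hz'S : z' ∈ S
        · exact hK'closed z hK'z z' ⟨hz, hz'S, hadj⟩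
        · exact absurd ((hmod z' hz'S z hz w (hKsub hw)).mp hadj.symm).symm hnadj'
      have h1 := cardLe hcrit hKu hKclq hK'clq hanti1 huK' hside1
      have h2 := cardLe hcrit hK'z hK'clq hKclq hanti2 hzKn hside2
      have hKpos : 0 < K.ncard := (Set.ncard_pos (Set.toFinite K)).mpr ⟨u, hKu⟩
      have hK'pos : 0 < K'.ncard := (Set.ncard_pos (Set.toFinite K')).mpr ⟨z, hK'z⟩
      omega
  · -- the co-component C is a proper module: induction gives a clique, contradiction
    have hClt : C.ncard < n := hcard ▸ Set.ncard_lt_ncard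
      ⟨hCsub, fun h => hCS (subset_antisymm hCsub h)⟩ (Set.toFinite S)
    have hCclq : G.IsClique C := IH C.ncard hClt C rfl (hCsub.trans hSM) hCmod
    exact hnadj (hCclq hCu hCv huv)


lemma no_P4_of_cogemFree {G : SimpleGraph V} (hfree : IsEmpty (cogem ↪g G))
    {a b c d e : V} (hab : G.Adj a b) (hbc : G.Adj b c) (hcd : G.Adj c d)
    (hac : ¬ G.Adj a c) (had : ¬ G.Adj a d) (hbd : ¬ G.Adj b d)
    (hea : ¬ G.Adj e a) (heb : ¬ G.Adj e b) (hec : ¬ G.Adj e c) (hed : ¬ G.Adj e d)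
    (hna : e ≠ a) (hnb : e ≠ b) (hnc : e ≠ c) (hnd : e ≠ d) : False := by
  have h1 : a ≠ b := G.ne_of_adj hab
  have h2 : b ≠ c := G.ne_of_adj hbc
  have h3 : c ≠ d := G.ne_of_adj hcd
  have h4 : a ≠ c := by rintro rfl; exact had hcd
  have h5 : a ≠ d := by rintro rfl; exact hac hcd.symm
  have h6 : b ≠ d := by rintro rfl; exact had hab
  refine hfree.false ⟨⟨Sum.elim ![a, b, c, d] (fun _ => e), ?_⟩, ?_⟩
  · rintro (p | p) (q | q) h <;>
      fin_cases p <;> fin_cases q <;> simp_all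
  · intro p q
    change G.Adj (Sum.elim ![a, b, c, d] (fun _ => e) p) (Sum.elim ![a, b, c, d] (fun _ => e) q) ↔ _
    rcases p with p | p <;> rcases q with q | q <;>
      fin_cases p <;> fin_cases q <;>
      simp [cogem, pathGraph_adj, G.adj_comm] <;>
      simp_all [G.adj_comm] <;> decide

end Stmt10Aux


theorem stmt10 (k : ℕ) (V : Type*) [Fintype V] (G : SimpleGraph V)
    (A₁ A₂ A₃ A₄ A₅ A₆ : Set V) (hH : ClassH G A₁ A₂ A₃ A₄ A₅ A₆)
    (hcrit : VertexCritical G k) :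
    G.IsClique A₁ ∧ G.IsClique A₂ ∧ G.IsClique A₃ ∧ G.IsClique A₄ := by
  classical
  have hcover : ∀ w : V, w ∈ A₁ ∨ w ∈ A₂ ∨ w ∈ A₃ ∨ w ∈ A₄ ∨ w ∈ A₅ ∨ w ∈ A₆ := by
    intro w
    have hw : w ∈ A₁ ∪ A₂ ∪ A₃ ∪ A₄ ∪ A₅ ∪ A₆ := hH.cover ▸ Set.mem_univ w
    simp only [Set.mem_union] at hw
    tauto
  have hdisj := hH.disj
  simp only [List.pairwise_cons, List.mem_cons, List.mem_singleton,
    List.not_mem_nil, forall_eq_or_imp, forall_eq, List.Pairwise.nil] at hdisj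
  have hd13 : Disjoint A₁ A₃ := by tauto
  have hd14 : Disjoint A₁ A₄ := by tauto
  have hd24 : Disjoint A₂ A₄ := by tauto
  -- P4-freeness of each part, from co-gem-freeness and an anticomplete witness
  have hP4₁ : ∀ a ∈ A₁, ∀ b ∈ A₁, ∀ c ∈ A₁, ∀ d ∈ A₁,
      G.Adj a b → G.Adj b c → G.Adj c d → ¬ G.Adj a c → ¬ G.Adj a d → ¬ G.Adj b d → False := by
    intro a ha b hb c hc d hd hab hbc hcd hac had hbd
    obtain ⟨e, he⟩ := hH.ne₄
    have hanti : ∀ x ∈ A₁, ¬ G.Adj e x := fun x hx => hH.anti₄ e he x (Or.inl (Or.inl hx))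
    have hne : ∀ x ∈ A₁, e ≠ x := by
      intro x hx h
      exact Set.disjoint_left.mp hd14 (h ▸ hx) (h ▸ he)
    exact Stmt10Aux.no_P4_of_cogemFree hH.cogemFree hab hbc hcd hac had hbd
      (hanti a ha) (hanti b hb) (hanti c hc) (hanti d hd)
      (hne a ha) (hne b hb) (hne c hc) (hne d hd)
  have hP4₂ : ∀ a ∈ A₂, ∀ b ∈ A₂, ∀ c ∈ A₂, ∀ d ∈ A₂,
      G.Adj a b → G.Adj b c → G.Adj c d → ¬ G.Adj a c → ¬ G.Adj a d → ¬ G.Adj b d → False := by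
    intro a ha b hb c hc d hd hab hbc hcd hac had hbd
    obtain ⟨e, he⟩ := hH.ne₄
    have hanti : ∀ x ∈ A₂, ¬ G.Adj e x := fun x hx => hH.anti₄ e he x (Or.inl (Or.inr hx))
    have hne : ∀ x ∈ A₂, e ≠ x := by
      intro x hx h
      exact Set.disjoint_left.mp hd24 (h ▸ hx) (h ▸ he)
    exact Stmt10Aux.no_P4_of_cogemFree hH.cogemFree hab hbc hcd hac had hbd
      (hanti a ha) (hanti b hb) (hanti c hc) (hanti d hd)
      (hne a ha) (hne b hb) (hne c hc) (hne d hd)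
  have hP4₃ : ∀ a ∈ A₃, ∀ b ∈ A₃, ∀ c ∈ A₃, ∀ d ∈ A₃,
      G.Adj a b → G.Adj b c → G.Adj c d → ¬ G.Adj a c → ¬ G.Adj a d → ¬ G.Adj b d → False := by
    intro a ha b hb c hc d hd hab hbc hcd hac had hbd
    obtain ⟨e, he⟩ := hH.ne₁
    have hanti : ∀ x ∈ A₃, ¬ G.Adj e x := fun x hx => hH.anti₁ e he x (Or.inl (Or.inl hx))
    have hne : ∀ x ∈ A₃, e ≠ x := by
      intro x hx h
      exact Set.disjoint_left.mp hd13 (h ▸ he) (h ▸ hx)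
    exact Stmt10Aux.no_P4_of_cogemFree hH.cogemFree hab hbc hcd hac had hbd
      (hanti a ha) (hanti b hb) (hanti c hc) (hanti d hd)
      (hne a ha) (hne b hb) (hne c hc) (hne d hd)
  have hP4₄ : ∀ a ∈ A₄, ∀ b ∈ A₄, ∀ c ∈ A₄, ∀ d ∈ A₄,
      G.Adj a b → G.Adj b c → G.Adj c d → ¬ G.Adj a c → ¬ G.Adj a d → ¬ G.Adj b d → False := by
    intro a ha b hb c hc d hd hab hbc hcd hac had hbd
    obtain ⟨e, he⟩ := hH.ne₁
    have hanti : ∀ x ∈ A₄, ¬ G.Adj e x := fun x hx => hH.anti₁ e he x (Or.inl (Or.inr hx))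
    have hne : ∀ x ∈ A₄, e ≠ x := by
      intro x hx h
      exact Set.disjoint_left.mp hd14 (h ▸ he) (h ▸ hx)
    exact Stmt10Aux.no_P4_of_cogemFree hH.cogemFree hab hbc hcd hac had hbd
      (hanti a ha) (hanti b hb) (hanti c hc) (hanti d hd)
      (hne a ha) (hne b hb) (hne c hc) (hne d hd)
  -- each part is a module
  have hmod₁ : ∀ w ∉ A₁, ∀ x ∈ A₁, ∀ y ∈ A₁, (G.Adj w x ↔ G.Adj w y) := by
    intro w hw x hx y hy
    rcases hcover w with h | h | h | h | h | h
    · exact absurd h hw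
    · exact iff_of_true (hH.comp₂ w h x (Or.inl (Or.inl hx)))
        (hH.comp₂ w h y (Or.inl (Or.inl hy)))
    · exact iff_of_false (fun ha => hH.anti₁ x hx w (Or.inl (Or.inl h)) ha.symm)
        (fun ha => hH.anti₁ y hy w (Or.inl (Or.inl h)) ha.symm)
    · exact iff_of_false (fun ha => hH.anti₁ x hx w (Or.inl (Or.inr h)) ha.symm)
        (fun ha => hH.anti₁ y hy w (Or.inl (Or.inr h)) ha.symm)
    · exact iff_of_true (hH.comp₁ x hx w (Or.inr h)).symm (hH.comp₁ y hy w (Or.inr h)).symm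
    · exact iff_of_false (fun ha => hH.anti₁ x hx w (Or.inr h) ha.symm)
        (fun ha => hH.anti₁ y hy w (Or.inr h) ha.symm)
  have hmod₂ : ∀ w ∉ A₂, ∀ x ∈ A₂, ∀ y ∈ A₂, (G.Adj w x ↔ G.Adj w y) := by
    intro w hw x hx y hy
    rcases hcover w with h | h | h | h | h | h
    · exact iff_of_true (hH.comp₁ w h x (Or.inl hx)) (hH.comp₁ w h y (Or.inl hy))
    · exact absurd h hw
    · exact iff_of_true (hH.comp₃ w h x (Or.inl (Or.inl hx)))
        (hH.comp₃ w h y (Or.inl (Or.inl hy)))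
    · exact iff_of_false (hH.anti₄ w h x (Or.inl (Or.inr hx)))
        (hH.anti₄ w h y (Or.inl (Or.inr hy)))
    · exact iff_of_false (fun ha => hH.anti₂ x hx w (Or.inr h) ha.symm)
        (fun ha => hH.anti₂ y hy w (Or.inr h) ha.symm)
    · exact iff_of_true (hH.comp₂ x hx w (Or.inr h)).symm (hH.comp₂ y hy w (Or.inr h)).symm
  have hmod₃ : ∀ w ∉ A₃, ∀ x ∈ A₃, ∀ y ∈ A₃, (G.Adj w x ↔ G.Adj w y) := by
    intro w hw x hx y hy
    rcases hcover w with h | h | h | h | h | h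
    · exact iff_of_false (hH.anti₁ w h x (Or.inl (Or.inl hx)))
        (hH.anti₁ w h y (Or.inl (Or.inl hy)))
    · exact iff_of_true (hH.comp₂ w h x (Or.inl (Or.inr hx)))
        (hH.comp₂ w h y (Or.inl (Or.inr hy)))
    · exact absurd h hw
    · exact iff_of_true (hH.comp₄ w h x (Or.inl hx)) (hH.comp₄ w h y (Or.inl hy))
    · exact iff_of_false (fun ha => hH.anti₃ x hx w (Or.inr h) ha.symm)
        (fun ha => hH.anti₃ y hy w (Or.inr h) ha.symm)
    · exact iff_of_true (hH.comp₃ x hx w (Or.inr h)).symm (hH.comp₃ y hy w (Or.inr h)).symm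
  have hmod₄ : ∀ w ∉ A₄, ∀ x ∈ A₄, ∀ y ∈ A₄, (G.Adj w x ↔ G.Adj w y) := by
    intro w hw x hx y hy
    rcases hcover w with h | h | h | h | h | h
    · exact iff_of_false (hH.anti₁ w h x (Or.inl (Or.inr hx)))
        (hH.anti₁ w h y (Or.inl (Or.inr hy)))
    · exact iff_of_false (hH.anti₂ w h x (Or.inl hx)) (hH.anti₂ w h y (Or.inl hy))
    · exact iff_of_true (hH.comp₃ w h x (Or.inl (Or.inr hx)))
        (hH.comp₃ w h y (Or.inl (Or.inr hy)))
    · exact absurd h hw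
    · exact iff_of_true (hH.comp₄ x hx w (Or.inr h)).symm (hH.comp₄ y hy w (Or.inr h)).symm
    · exact iff_of_false (fun ha => hH.anti₄ x hx w (Or.inr h) ha.symm)
        (fun ha => hH.anti₄ y hy w (Or.inr h) ha.symm)
  exact ⟨Stmt10Aux.module_clique hcrit hP4₁ A₁.ncard A₁ rfl subset_rfl hmod₁,
    Stmt10Aux.module_clique hcrit hP4₂ A₂.ncard A₂ rfl subset_rfl hmod₂,
    Stmt10Aux.module_clique hcrit hP4₃ A₃.ncard A₃ rfl subset_rfl hmod₃,
    Stmt10Aux.module_clique hcrit hP4₄ A₄.ncard A₄ rfl subset_rfl hmod₄⟩
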